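/- The function f is strictly convex on the part of the probability simplex where the first coordinate is positive: for every integer d ≥ 1, all probability vectors p ≠ q in ℝ^d with p_1 > 0 and q_1 > 0, and every λ ∈ (0,1), it holds that f(λp + (1−λ)q) < λ·f(p) + (1−λ)·f(q). -/

import Mathlib

open MeasureTheory Real

/-- `p'(t) = ∑_{i=1}^d i·p_i·t^{i-1}`, where the probability vector `p : Fin d → ℝ`
has `p i` corresponding to degree `i + 1`. -/
noncomputable def pderiv {d : ℕ} (p : Fin d → ℝ) (t : ℝ) : ℝ :=
  ∑ i : Fin d, ((i : ℕ) + 1 : ℝ) * p i * t ^ (i : ℕ)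

lemma pderiv_ge {d : ℕ} (hd : 1 ≤ d) (p : Fin d → ℝ) (hp0 : ∀ i, 0 ≤ p i)
    {t : ℝ} (ht : 0 ≤ t) : p ⟨0, hd⟩ ≤ pderiv p t := by
  have h := Finset.single_le_sum (f := fun i : Fin d => ((i : ℕ) + 1 : ℝ) * p i * t ^ (i : ℕ))
    (fun i _ => mul_nonneg (mul_nonneg (by positivity) (hp0 i)) (pow_nonneg ht _))
    (Finset.mem_univ (⟨0, hd⟩ : Fin d))
  simpa [pderiv] using h

lemma pderiv_comb {d : ℕ} (p q : Fin d → ℝ) (l t : ℝ) :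
    pderiv (l • p + (1 - l) • q) t = l * pderiv p t + (1 - l) * pderiv q t := by
  simp only [pderiv, Pi.add_apply, Pi.smul_apply, smul_eq_mul, Finset.mul_sum,
    ← Finset.sum_add_distrib]
  exact Finset.sum_congr rfl fun i _ => by ring

lemma integrableOn_majorant :
    IntegrableOn (fun t : ℝ => (1 - t) ^ (-(1/2) : ℝ)) (Set.Ioo 0 1) := by
  have h := (intervalIntegral.intervalIntegrable_rpow' (a := 0) (b := 1) (r := -(1/2)) (by norm_num)).comp_sub_left 1
  simp only [sub_zero, sub_self] at h
  replace h := h.symm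
  rw [intervalIntegrable_iff_integrableOn_Ioo_of_le (by norm_num)] at h
  exact h

lemma neg_log_le (x : ℝ) (hx : 0 < x) : -Real.log x ≤ 2 * x ^ (-(1/2) : ℝ) := by
  have hy : (0:ℝ) < x ^ (-(1/2) : ℝ) := Real.rpow_pos_of_pos hx _
  have h1 : Real.log (x ^ (-(1/2) : ℝ)) = -(1/2) * Real.log x := Real.log_rpow hx _
  have h2 := Real.log_le_sub_one_of_pos hy
  linarith

lemma div_comb_lt {L A B l : ℝ} (hL : 0 < L) (hA : 0 < A) (hB : 0 < B)
    (hAB : A ≠ B) (hl0 : 0 < l) (hl1 : l < 1) :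
    L / (l * A + (1 - l) * B) < l * (L / A) + (1 - l) * (L / B) := by
  have h1l : 0 < 1 - l := by linarith
  have hD : 0 < l * A + (1 - l) * B := by positivity
  have e : l * (L / A) + (1 - l) * (L / B) = L * (l * B + (1 - l) * A) / (A * B) := by
    field_simp
  rw [e, div_lt_div_iff₀ hD (mul_pos hA hB)]
  have hsq : 0 < (A - B) ^ 2 := by
    have h : A - B ≠ 0 := sub_ne_zero.2 hAB
    positivity
  nlinarith [mul_pos hL (mul_pos (mul_pos hl0 h1l) hsq)]

lemma pderiv_continuous {d : ℕ} (p : Fin d → ℝ) : Continuous (pderiv p) := by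
  unfold pderiv
  exact continuous_finset_sum _ fun i _ => by continuity

lemma integrableOn_F {d : ℕ} (hd : 1 ≤ d) (p : Fin d → ℝ) (hp0 : ∀ i, 0 ≤ p i)
    (hp : 0 < p ⟨0, hd⟩) :
    IntegrableOn (fun t => -Real.log (1 - t) / pderiv p t) (Set.Ioo 0 1) := by
  have hmeas : AEStronglyMeasurable (fun t => -Real.log (1 - t) / pderiv p t)
      (volume.restrict (Set.Ioo (0:ℝ) 1)) := by
    apply Measurable.aestronglyMeasurable
    exact ((Real.measurable_log.comp (measurable_const.sub measurable_id)).neg).div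
      (pderiv_continuous p).measurable
  have hmaj : IntegrableOn
      (fun t : ℝ => (p ⟨0, hd⟩)⁻¹ * 2 * (1 - t) ^ (-(1/2) : ℝ)) (Set.Ioo 0 1) :=
    integrableOn_majorant.const_mul _
  refine Integrable.mono' hmaj hmeas ?_
  rw [ae_restrict_iff' measurableSet_Ioo]
  refine ae_of_all _ fun t ht => ?_
  have ht0 : (0:ℝ) < t := ht.1
  have ht1 : t < 1 := ht.2
  have hx : (0:ℝ) < 1 - t := by linarith
  have hL : 0 ≤ -Real.log (1 - t) := by
    have := Real.log_nonpos hx.le (by linarith)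
    linarith
  have hA : 0 < pderiv p t := lt_of_lt_of_le hp (pderiv_ge hd p hp0 ht0.le)
  rw [Real.norm_eq_abs, abs_of_nonneg (div_nonneg hL hA.le)]
  calc -Real.log (1 - t) / pderiv p t
      ≤ -Real.log (1 - t) / p ⟨0, hd⟩ := by
        gcongr
        exact pderiv_ge hd p hp0 ht0.le
    _ ≤ (2 * (1 - t) ^ (-(1/2) : ℝ)) / p ⟨0, hd⟩ := by
        gcongr
        exact neg_log_le _ hx
    _ = (p ⟨0, hd⟩)⁻¹ * 2 * (1 - t) ^ (-(1/2) : ℝ) := by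
        rw [div_eq_mul_inv]; ring

theorem stmt_4 (d : ℕ) (hd : 1 ≤ d) (p q : Fin d → ℝ)
    (hp0 : ∀ i, 0 ≤ p i) (hp1 : ∑ i, p i = 1) (hp : 0 < p ⟨0, hd⟩)
    (hq0 : ∀ i, 0 ≤ q i) (hq1 : ∑ i, q i = 1) (hq : 0 < q ⟨0, hd⟩)
    (hpq : p ≠ q) (l : ℝ) (hl0 : 0 < l) (hl1 : l < 1) :
    (∫ t in Set.Ioo (0 : ℝ) 1,
        (-Real.log (1 - t)) / pderiv (l • p + (1 - l) • q) t) <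
      l * (∫ t in Set.Ioo (0 : ℝ) 1, (-Real.log (1 - t)) / pderiv p t) +
      (1 - l) * (∫ t in Set.Ioo (0 : ℝ) 1, (-Real.log (1 - t)) / pderiv q t) := by
  have h1l : 0 < 1 - l := by linarith
  set r : Fin d → ℝ := l • p + (1 - l) • q with hr
  have hr0 : ∀ i, 0 ≤ r i := fun i => by
    simp only [hr, Pi.add_apply, Pi.smul_apply, smul_eq_mul]
    exact add_nonneg (mul_nonneg hl0.le (hp0 i)) (mul_nonneg h1l.le (hq0 i))
  have hrpos : 0 < r ⟨0, hd⟩ := by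
    simp only [hr, Pi.add_apply, Pi.smul_apply, smul_eq_mul]
    exact add_pos (mul_pos hl0 hp) (mul_pos h1l hq)
  have Ip := integrableOn_F hd p hp0 hp
  have Iq := integrableOn_F hd q hq0 hq
  have Ir := integrableOn_F hd r hr0 hrpos
  set F : (Fin d → ℝ) → ℝ → ℝ := fun v t => -Real.log (1 - t) / pderiv v t with hF
  have hsum : IntegrableOn (fun t => l * F p t + (1 - l) * F q t) (Set.Ioo (0:ℝ) 1) :=
    (Ip.const_mul l).add (Iq.const_mul (1 - l))
  have hg_int : IntegrableOn (fun t => l * F p t + (1 - l) * F q t - F r t)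
      (Set.Ioo (0:ℝ) 1) := hsum.sub Ir
  -- the polynomial pderiv p - pderiv q is nonzero
  obtain ⟨i₀, hi₀⟩ : ∃ i, p i ≠ q i := by
    by_contra h
    push_neg at h
    exact hpq (funext h)
  set P : Polynomial ℝ :=
    ∑ i : Fin d, Polynomial.C (((i:ℕ) + 1 : ℝ) * (p i - q i)) * Polynomial.X ^ (i:ℕ) with hP
  have hPeval : ∀ t, P.eval t = pderiv p t - pderiv q t := by
    intro t
    simp only [hP, Polynomial.eval_finset_sum, Polynomial.eval_mul, Polynomial.eval_C,
      Polynomial.eval_pow, Polynomial.eval_X, pderiv, ← Finset.sum_sub_distrib]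
    exact Finset.sum_congr rfl fun i _ => by ring
  have hPne : P ≠ 0 := by
    intro h
    have hc : P.coeff (i₀ : ℕ) = ((i₀:ℕ) + 1 : ℝ) * (p i₀ - q i₀) := by
      rw [hP, Polynomial.finset_sum_coeff]
      rw [Finset.sum_eq_single i₀]
      · rw [Polynomial.coeff_C_mul, Polynomial.coeff_X_pow, if_pos rfl, mul_one]
      · intro j _ hj
        have hne : ((i₀ : Fin d) : ℕ) ≠ (j : ℕ) := fun hh => hj (Fin.ext hh.symm)
        rw [Polynomial.coeff_C_mul, Polynomial.coeff_X_pow, if_neg hne, mul_zero]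
      · intro h'; exact absurd (Finset.mem_univ i₀) h'
    rw [h] at hc
    simp only [Polynomial.coeff_zero] at hc
    have h2 : p i₀ - q i₀ ≠ 0 := sub_ne_zero.2 hi₀
    exact (mul_ne_zero (by positivity) h2) hc.symm
  have hfin : {t : ℝ | P.IsRoot t}.Finite := Polynomial.finite_setOf_isRoot hPne
  have hae : ∀ᵐ t ∂(volume.restrict (Set.Ioo (0:ℝ) 1)), pderiv p t ≠ pderiv q t := by
    apply ae_restrict_of_ae
    rw [ae_iff]
    refine measure_mono_null ?_ (hfin.measure_zero volume)
    intro t ht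
    simp only [Set.mem_setOf_eq, not_not] at ht
    show P.IsRoot t
    rw [Polynomial.IsRoot, hPeval, sub_eq_zero]
    exact ht
  have hlt : ∀ᵐ t ∂(volume.restrict (Set.Ioo (0:ℝ) 1)),
      0 < l * F p t + (1 - l) * F q t - F r t := by
    filter_upwards [hae, ae_restrict_mem measurableSet_Ioo] with t hne ht
    have ht0 : (0:ℝ) < t := ht.1
    have ht1 : t < 1 := ht.2
    have hx : (0:ℝ) < 1 - t := by linarith
    have hL : 0 < -Real.log (1 - t) := by
      have := Real.log_neg hx (by linarith)
      linarith
    have hA : 0 < pderiv p t := lt_of_lt_of_le hp (pderiv_ge hd p hp0 ht0.le)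
    have hB : 0 < pderiv q t := lt_of_lt_of_le hq (pderiv_ge hd q hq0 ht0.le)
    have key := div_comb_lt hL hA hB hne hl0 hl1
    have hFr : F r t = -Real.log (1 - t) / (l * pderiv p t + (1 - l) * pderiv q t) := by
      rw [hF, hr]
      simp only [pderiv_comb]
    rw [sub_pos]
    simp only [hF, hr, pderiv_comb]
    exact key
  have hnonneg : 0 ≤ᵐ[volume.restrict (Set.Ioo (0:ℝ) 1)]
      fun t => l * F p t + (1 - l) * F q t - F r t :=
    hlt.mono fun t h => h.le
  have hnull : (volume.restrict (Set.Ioo (0:ℝ) 1))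
      {t | ¬ (0 < l * F p t + (1 - l) * F q t - F r t)} = 0 := by
    rw [← ae_iff]
    exact hlt
  have hsub : {t : ℝ | ¬ (0 < l * F p t + (1 - l) * F q t - F r t)}ᶜ ⊆
      Function.support (fun t => l * F p t + (1 - l) * F q t - F r t) := by
    intro t ht
    simp only [Set.mem_compl_iff, Set.mem_setOf_eq, not_not] at ht
    exact ne_of_gt ht
  have hμsupp : 0 < (volume.restrict (Set.Ioo (0:ℝ) 1))
      (Function.support (fun t => l * F p t + (1 - l) * F q t - F r t)) := by
    set μ := volume.restrict (Set.Ioo (0:ℝ) 1) with hμ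
    set s := {t : ℝ | ¬ (0 < l * F p t + (1 - l) * F q t - F r t)} with hs
    have huniv : μ Set.univ = 1 := by
      rw [hμ, Measure.restrict_apply_univ, Real.volume_Ioo]
      norm_num
    have hle : μ Set.univ ≤
        μ (Function.support (fun t => l * F p t + (1 - l) * F q t - F r t)) + μ s := by
      calc μ Set.univ = μ (sᶜ ∪ s) := by rw [Set.compl_union_self]
        _ ≤ μ sᶜ + μ s := measure_union_le _ _
        _ ≤ μ (Function.support (fun t => l * F p t + (1 - l) * F q t - F r t)) + μ s := by
            exact add_le_add (measure_mono hsub) le_rfl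
    rw [huniv, hnull, add_zero] at hle
    exact lt_of_lt_of_le (by norm_num) hle
  have hpos : 0 < ∫ t in Set.Ioo (0:ℝ) 1, (l * F p t + (1 - l) * F q t - F r t) :=
    (integral_pos_iff_support_of_nonneg_ae hnonneg hg_int).2 hμsupp
  have heq : (∫ t in Set.Ioo (0:ℝ) 1, (l * F p t + (1 - l) * F q t - F r t)) =
      l * (∫ t in Set.Ioo (0:ℝ) 1, F p t) + (1 - l) * (∫ t in Set.Ioo (0:ℝ) 1, F q t)
        - ∫ t in Set.Ioo (0:ℝ) 1, F r t := by
    rw [integral_sub hsum Ir, integral_add (Ip.const_mul l) (Iq.const_mul (1 - l)),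
      integral_const_mul, integral_const_mul]
  rw [heq] at hpos
  simp only [hF, hr] at hpos
  linarith
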